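/- Every finite unit OC interval order has order dimension at most 3. That is, if P admits a representation where each element x is assigned a unit-length real interval with endpoints l(x) and l(x)+1, each interval being either open or closed, such that x < y in P iff the interval of x lies entirely to the left of (is disjoint from and below) the interval of y, then dim(P) ≤ 3. -/

import Mathlib

/-- `L` is a linear extension of the partial order on `α`. -/
def IsLinearExtension {α : Type*} [PartialOrder α] (L : α → α → Prop) : Prop :=
  IsLinearOrder α L ∧ ∀ x y : α, x ≤ y → L x y

/-- The order dimension of `α` is at most `t`. -/
def DimLE (α : Type*) [PartialOrder α] (t : ℕ) : Prop :=
  ∃ L : Fin t → α → α → Prop, (∀ i, IsLinearExtension (L i)) ∧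
    ∀ x y : α, x ≤ y ↔ ∀ i, L i x y

namespace Stmt6Aux

lemma realizer_of_keys {α : Type*} [PartialOrder α] {K : Type} [LinearOrder K]
    (k0 k1 k2 : α → K)
    (hinj0 : Function.Injective k0) (hinj1 : Function.Injective k1)
    (hinj2 : Function.Injective k2)
    (hext0 : ∀ x y : α, x < y → k0 x < k0 y)
    (hext1 : ∀ x y : α, x < y → k1 x < k1 y)
    (hext2 : ∀ x y : α, x < y → k2 x < k2 y)
    (hcov : ∀ x y : α, x ≠ y → ¬ x < y → ¬ y < x →
      (k0 y < k0 x ∨ k1 y < k1 x ∨ k2 y < k2 x)) :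
    DimLE α 3 := by
  let key : Fin 3 → α → K := ![k0, k1, k2]
  have hinj : ∀ i, Function.Injective (key i) := by
    intro i
    fin_cases i
    · exact hinj0
    · exact hinj1
    · exact hinj2
  have hext : ∀ (i : Fin 3) (x y : α), x < y → key i x < key i y := by
    intro i
    fin_cases i
    · exact hext0
    · exact hext1
    · exact hext2
  refine ⟨fun i x y => key i x ≤ key i y, fun i => ⟨?_, ?_⟩, fun x y => ⟨?_, ?_⟩⟩
  · exact { refl := fun a => le_refl _
            trans := fun a b c h1 h2 => le_trans h1 h2
            antisymm := fun a b h1 h2 => hinj i (le_antisymm h1 h2)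
            total := fun a b => le_total _ _ }
  · intro x y hxy
    rcases eq_or_lt_of_le hxy with rfl | hlt
    · exact le_refl _
    · exact (hext i x y hlt).le
  · intro hxy i
    rcases eq_or_lt_of_le hxy with rfl | hlt
    · exact le_refl _
    · exact (hext i x y hlt).le
  · intro hall
    by_contra hxy
    have hne : x ≠ y := fun e => hxy (e ▸ le_refl x)
    by_cases hyx : y < x
    · exact absurd (hall 0) (not_le.mpr (hext 0 y x hyx))
    · have hnxy : ¬ x < y := fun hl => hxy hl.le
      rcases hcov x y hne hnxy hyx with hi | hi | hi
      · exact absurd (hall 0) (not_le.mpr hi)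
      · exact absurd (hall 1) (not_le.mpr hi)
      · exact absurd (hall 2) (not_le.mpr hi)

lemma lex_le_d {A B : Type*} [LinearOrder A] [LinearOrder B] {a b : A} {u v : B}
    (h : toLex (a, u) ≤ toLex (b, v)) : a < b ∨ (a = b ∧ u ≤ v) := by
  simpa using Prod.Lex.le_iff.mp h

lemma lex_lt_left {A B : Type*} [LinearOrder A] [LinearOrder B] {a b : A} {u v : B}
    (h : a < b) : toLex (a, u) < toLex (b, v) :=
  Prod.Lex.lt_iff.mpr (Or.inl h)

lemma lex_lt_right {A B : Type*} [LinearOrder A] [LinearOrder B] {a b : A} {u v : B}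
    (h : a = b) (h2 : u < v) : toLex (a, u) < toLex (b, v) :=
  Prod.Lex.lt_iff.mpr (Or.inr ⟨h, h2⟩)

/-- Greedy block threshold sequence. -/
noncomputable def blkAux (s : Finset ℝ) (r0 : ℝ) : ℕ → ℝ
  | 0 => r0
  | n+1 =>
      if h : (s.filter (fun v => blkAux s r0 n + 1 ≤ v)).Nonempty
      then (s.filter (fun v => blkAux s r0 n + 1 ≤ v)).min' h
      else blkAux s r0 n + 2

lemma blkAux_zero (s : Finset ℝ) (r0 : ℝ) : blkAux s r0 0 = r0 := rfl

lemma blkAux_step (s : Finset ℝ) (r0 : ℝ) (n : ℕ) :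
    blkAux s r0 n + 1 ≤ blkAux s r0 (n+1) := by
  rw [blkAux]
  split_ifs with h
  · exact (Finset.mem_filter.mp (Finset.min'_mem _ h)).2
  · linarith

lemma blkAux_min (s : Finset ℝ) (r0 : ℝ) (n : ℕ) {v : ℝ} (hv : v ∈ s)
    (hge : blkAux s r0 n + 1 ≤ v) : blkAux s r0 (n+1) ≤ v := by
  have hvm : v ∈ s.filter (fun w => blkAux s r0 n + 1 ≤ w) :=
    Finset.mem_filter.mpr ⟨hv, hge⟩
  rw [blkAux, dif_pos ⟨v, hvm⟩]
  exact Finset.min'_le _ v hvm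

lemma blkAux_lower (s : Finset ℝ) (r0 : ℝ) (n : ℕ) :
    r0 + n ≤ blkAux s r0 n := by
  induction n with
  | zero => simp [blkAux]
  | succ n ih =>
      have h1 := blkAux_step s r0 n
      push_cast
      push_cast at ih
      linarith

lemma blkAux_mono (s : Finset ℝ) (r0 : ℝ) {m n : ℕ} (hmn : m ≤ n) :
    blkAux s r0 m ≤ blkAux s r0 n := by
  obtain ⟨k, rfl⟩ := Nat.exists_eq_add_of_le hmn
  clear hmn
  induction k with
  | zero => simp
  | succ k ih =>
      have h1 := blkAux_step s r0 (m + k)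
      have : m + (k+1) = (m+k) + 1 := by omega
      rw [this]
      linarith

/-! Interval computation lemmas -/

lemma forall_Ioo_Ioo {a b : ℝ} :
    (∀ s ∈ Set.Ioo a (a+1), ∀ t ∈ Set.Ioo b (b+1), s < t) ↔ a + 1 ≤ b := by
  constructor
  · intro h
    by_contra hab
    push_neg at hab
    rcases lt_or_ge a (b+1) with hov | hno
    · have hu : max a b < min (a+1) (b+1) :=
        max_lt (lt_min (by linarith) hov) (lt_min (by linarith) (by linarith))
      have hw1 : max a b < (max a b + min (a+1) (b+1))/2 := by linarith
      have hw2 : (max a b + min (a+1) (b+1))/2 < min (a+1) (b+1) := by linarith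
      have hsx : (max a b + min (a+1) (b+1))/2 ∈ Set.Ioo a (a+1) :=
        ⟨lt_of_le_of_lt (le_max_left a b) hw1, lt_of_lt_of_le hw2 (min_le_left _ _)⟩
      have hsy : (max a b + min (a+1) (b+1))/2 ∈ Set.Ioo b (b+1) :=
        ⟨lt_of_le_of_lt (le_max_right a b) hw1, lt_of_lt_of_le hw2 (min_le_right _ _)⟩
      exact lt_irrefl _ (h _ hsx _ hsy)
    · have hsx : a + 1/2 ∈ Set.Ioo a (a+1) := by constructor <;> linarith
      have hsy : b + 1/2 ∈ Set.Ioo b (b+1) := by constructor <;> linarith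
      have := h _ hsx _ hsy
      linarith
  · intro hab s hs t ht
    have h1 := hs.2
    have h2 := ht.1
    linarith

lemma forall_Ioo_Icc {a b : ℝ} :
    (∀ s ∈ Set.Ioo a (a+1), ∀ t ∈ Set.Icc b (b+1), s < t) ↔ a + 1 ≤ b := by
  constructor
  · intro h
    by_contra hab
    push_neg at hab
    rcases lt_or_ge a (b+1) with hov | hno
    · have hu : max a b < min (a+1) (b+1) :=
        max_lt (lt_min (by linarith) hov) (lt_min (by linarith) (by linarith))
      have hw1 : max a b < (max a b + min (a+1) (b+1))/2 := by linarith
      have hw2 : (max a b + min (a+1) (b+1))/2 < min (a+1) (b+1) := by linarith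
      have hsx : (max a b + min (a+1) (b+1))/2 ∈ Set.Ioo a (a+1) :=
        ⟨lt_of_le_of_lt (le_max_left a b) hw1, lt_of_lt_of_le hw2 (min_le_left _ _)⟩
      have hsy : (max a b + min (a+1) (b+1))/2 ∈ Set.Icc b (b+1) :=
        ⟨(lt_of_le_of_lt (le_max_right a b) hw1).le,
          (lt_of_lt_of_le hw2 (min_le_right _ _)).le⟩
      exact lt_irrefl _ (h _ hsx _ hsy)
    · have hsx : a + 1/2 ∈ Set.Ioo a (a+1) := by constructor <;> linarith
      have hsy : b + 1 ∈ Set.Icc b (b+1) := by constructor <;> linarith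
      have := h _ hsx _ hsy
      linarith
  · intro hab s hs t ht
    have h1 := hs.2
    have h2 := ht.1
    linarith

lemma forall_Icc_Ioo {a b : ℝ} :
    (∀ s ∈ Set.Icc a (a+1), ∀ t ∈ Set.Ioo b (b+1), s < t) ↔ a + 1 ≤ b := by
  constructor
  · intro h
    by_contra hab
    push_neg at hab
    rcases lt_or_ge a (b+1) with hov | hno
    · have hu : max a b < min (a+1) (b+1) :=
        max_lt (lt_min (by linarith) hov) (lt_min (by linarith) (by linarith))
      have hw1 : max a b < (max a b + min (a+1) (b+1))/2 := by linarith
      have hw2 : (max a b + min (a+1) (b+1))/2 < min (a+1) (b+1) := by linarith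
      have hsx : (max a b + min (a+1) (b+1))/2 ∈ Set.Icc a (a+1) :=
        ⟨(lt_of_le_of_lt (le_max_left a b) hw1).le,
          (lt_of_lt_of_le hw2 (min_le_left _ _)).le⟩
      have hsy : (max a b + min (a+1) (b+1))/2 ∈ Set.Ioo b (b+1) :=
        ⟨lt_of_le_of_lt (le_max_right a b) hw1, lt_of_lt_of_le hw2 (min_le_right _ _)⟩
      exact lt_irrefl _ (h _ hsx _ hsy)
    · have hsx : a ∈ Set.Icc a (a+1) := by constructor <;> linarith
      have hsy : b + 1/2 ∈ Set.Ioo b (b+1) := by constructor <;> linarith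
      have := h _ hsx _ hsy
      linarith
  · intro hab s hs t ht
    have h1 := hs.2
    have h2 := ht.1
    linarith

lemma forall_Icc_Icc {a b : ℝ} :
    (∀ s ∈ Set.Icc a (a+1), ∀ t ∈ Set.Icc b (b+1), s < t) ↔ a + 1 < b := by
  constructor
  · intro h
    by_contra hab
    push_neg at hab
    rcases le_or_gt a (b+1) with hov | hno
    · have hs1 : min (a+1) (b+1) ∈ Set.Icc a (a+1) :=
        ⟨le_min (by linarith) hov, min_le_left _ _⟩
      have ht1 : max a b ∈ Set.Icc b (b+1) :=
        ⟨le_max_right a b, max_le hov (by linarith)⟩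
      have := h _ hs1 _ ht1
      have h3 : max a b ≤ min (a+1) (b+1) :=
        max_le (le_min (by linarith) hov) (le_min (by linarith) (by linarith))
      linarith
    · have hsx : a ∈ Set.Icc a (a+1) := by constructor <;> linarith
      have hsy : b + 1 ∈ Set.Icc b (b+1) := by constructor <;> linarith
      have := h _ hsx _ hsy
      linarith
  · intro hab s hs t ht
    have h1 := hs.2
    have h2 := ht.1
    linarith

/-! The three keys -/

def keyTwo {α : Type*} (blk : α → ℕ) (l cR : α → ℝ) (ι : α → ℤ) (x : α) :
    ℕ ×ₗ (ℝ ×ₗ (ℝ ×ₗ ℤ)) :=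
  toLex (blk x, toLex (-l x, toLex (-cR x, -ι x)))

def keyPh {α : Type*} (p : ℕ) (blk : α → ℕ) (l cR slot : α → ℝ) (ι : α → ℤ) (x : α) :
    ℕ ×ₗ (ℝ ×ₗ (ℝ ×ₗ ℤ)) :=
  toLex ((blk x + p) / 2,
    if (blk x + p) % 2 = 0 then toLex (l x, toLex (cR x, ι x))
    else toLex (l x - 1, toLex (slot x, ι x)))

lemma main_aux {α : Type*} [Fintype α] [PartialOrder α] (l : α → ℝ) (cl : α → Bool)
    (hlt : ∀ x y : α, x < y ↔
      (l x + 1 < l y ∨ (l x + 1 = l y ∧ ¬(cl x = true ∧ cl y = true)))) :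
    DimLE α 3 := by
  classical
  cases isEmpty_or_nonempty α with
  | inl hemp =>
      exact realizer_of_keys (K := ℕ) (fun _ => 0) (fun _ => 0) (fun _ => 0)
        (fun a b _ => (IsEmpty.false a).elim)
        (fun a b _ => (IsEmpty.false a).elim)
        (fun a b _ => (IsEmpty.false a).elim)
        (fun x y _ => (IsEmpty.false x).elim)
        (fun x y _ => (IsEmpty.false x).elim)
        (fun x y _ => (IsEmpty.false x).elim)
        (fun x y _ _ _ => (IsEmpty.false x).elim)
  | inr hne =>
    have hs : (Finset.univ.image l).Nonempty :=
      Finset.Nonempty.image Finset.univ_nonempty l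
    set s : Finset ℝ := Finset.univ.image l with hsdef
    set r0 : ℝ := s.min' hs with hr0def
    set N : ℕ := Nat.ceil (s.max' hs - r0) with hNdef
    have hmem : ∀ x : α, l x ∈ s := by
      intro x; rw [hsdef]; exact Finset.mem_image_of_mem l (Finset.mem_univ x)
    have hminle : ∀ x : α, r0 ≤ l x := fun x => Finset.min'_le s (l x) (hmem x)
    have hlemax : ∀ x : α, l x ≤ s.max' hs := fun x => Finset.le_max' s (l x) (hmem x)
    have hbound : ∀ (x : α) (t : ℕ), blkAux s r0 t ≤ l x → t ≤ N := by
      intro x t h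
      have h1 : r0 + t ≤ blkAux s r0 t := blkAux_lower s r0 t
      have h2 : (t : ℝ) ≤ s.max' hs - r0 := by
        have := hlemax x
        linarith
      have h3 : (t : ℝ) ≤ (N : ℝ) := le_trans h2 (Nat.le_ceil _)
      exact_mod_cast h3
    set blk : α → ℕ := fun x => Nat.findGreatest (fun t => blkAux s r0 t ≤ l x) N
      with hblkdef
    have hP1 : ∀ x : α, blkAux s r0 (blk x) ≤ l x := by
      intro x
      exact Nat.findGreatest_spec (P := fun t => blkAux s r0 t ≤ l x) (Nat.zero_le N)
        (by show blkAux s r0 0 ≤ l x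
            rw [blkAux_zero]; exact hminle x)
    have hP2 : ∀ x : α, l x < blkAux s r0 (blk x + 1) := by
      intro x
      by_contra hcon
      push_neg at hcon
      have hb := hbound x (blk x + 1) hcon
      have := Nat.findGreatest_is_greatest (P := fun t => blkAux s r0 t ≤ l x)
        (Nat.lt_succ_self (blk x)) hb
      exact this hcon
    have hB3 : ∀ x y : α, l x + 1 ≤ l y → blk x < blk y := by
      intro x y hxy
      have h1 : blkAux s r0 (blk x) + 1 ≤ l y := by
        have := hP1 x; linarith
      have h2 : blkAux s r0 (blk x + 1) ≤ l y := blkAux_min s r0 (blk x) (hmem y) h1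
      have h3 : blk x + 1 ≤ N := hbound y (blk x + 1) h2
      have h4 : blk x + 1 ≤ blk y := Nat.le_findGreatest h3 h2
      omega
    have hB2 : ∀ x y : α, blk x + 2 ≤ blk y → l x + 1 < l y := by
      intro x y hxy
      have h1 := hP2 x
      have h2 := blkAux_step s r0 (blk x + 1)
      have h3 : blkAux s r0 (blk x + 2) ≤ blkAux s r0 (blk y) := blkAux_mono s r0 hxy
      have h4 := hP1 y
      have : blk x + 1 + 1 = blk x + 2 := by omega
      rw [this] at h2
      linarith
    -- data for the keys
    set ι : α → ℤ := fun x => ((Fintype.equivFin α x : ℕ) : ℤ) with hιdef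
    have hι : Function.Injective ι := by
      intro a b hab
      apply (Fintype.equivFin α).injective
      apply Fin.val_injective
      have hab' : (((Fintype.equivFin α a : ℕ)) : ℤ) = ((Fintype.equivFin α b : ℕ) : ℤ) := hab
      exact_mod_cast hab'
    set cR : α → ℝ := fun x => if cl x = true then (1:ℝ) else 0 with hcRdef
    set slot : α → ℝ := fun x => if cl x = true then (1/2:ℝ) else 3/2 with hslotdef
    have hcR0 : ∀ x, cl x = true → cR x = 1 := by
      intro x hx; rw [hcRdef]; simp [hx]
    have hcR1 : ∀ x, ¬(cl x = true) → cR x = 0 := by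
      intro x hx; rw [hcRdef]; simp [hx]
    have hslot0 : ∀ x, cl x = true → slot x = 1/2 := by
      intro x hx; rw [hslotdef]; simp [hx]
    have hslot1 : ∀ x, ¬(cl x = true) → slot x = 3/2 := by
      intro x hx; rw [hslotdef]; simp [hx]
    have hcRrange : ∀ x, cR x = 0 ∨ cR x = 1 := by
      intro x
      by_cases hx : cl x = true
      · exact Or.inr (hcR0 x hx)
      · exact Or.inl (hcR1 x hx)
    -- extension lemmas
    have hextB : ∀ x y : α, x < y → blk x < blk y := by
      intro x y hxy
      have := (hlt x y).mp hxy
      apply hB3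
      rcases this with h | ⟨h, _⟩ <;> linarith
    have hextTwo : ∀ x y : α, x < y →
        keyTwo blk l cR ι x < keyTwo blk l cR ι y := by
      intro x y hxy
      unfold keyTwo
      exact lex_lt_left (hextB x y hxy)
    have hextPh : ∀ (p : ℕ) (x y : α), x < y →
        keyPh p blk l cR slot ι x < keyPh p blk l cR slot ι y := by
      intro p x y hxy
      have harith := (hlt x y).mp hxy
      have hb : blk x < blk y := hextB x y hxy
      unfold keyPh
      rcases Nat.lt_or_ge ((blk x + p)/2) ((blk y + p)/2) with hg | hg
      · exact lex_lt_left hg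
      · have hgeq : (blk x + p)/2 = (blk y + p)/2 := by omega
        have hpx : (blk x + p) % 2 = 0 := by omega
        have hpy : ¬((blk y + p) % 2 = 0) := by omega
        rw [if_pos hpx, if_neg hpy]
        refine lex_lt_right hgeq ?_
        rcases harith with h | ⟨heq, hcc⟩
        · exact lex_lt_left (by linarith)
        · refine lex_lt_right (by linarith) ?_
          refine lex_lt_left ?_
          by_cases hcy : cl y = true
          · have hcx : ¬ cl x = true := fun hx => hcc ⟨hx, hcy⟩
            rw [hcR1 x hcx, hslot0 y hcy]
            norm_num
          · rw [hslot1 y hcy]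
            rcases hcRrange x with h0 | h0 <;> rw [h0] <;> norm_num
    -- injectivity
    have hinjTwo : Function.Injective (keyTwo blk l cR ι) := by
      intro a b hab
      unfold keyTwo at hab
      simp only [toLex_inj, Prod.mk.injEq] at hab
      obtain ⟨_, _, _, h4⟩ := hab
      exact hι (by linarith)
    have hinjPh : ∀ p : ℕ, Function.Injective (keyPh p blk l cR slot ι) := by
      intro p a b hab
      unfold keyPh at hab
      simp only [toLex_inj, Prod.mk.injEq] at hab
      obtain ⟨hg, hrest⟩ := hab
      by_cases h1 : (blk a + p) % 2 = 0 <;> by_cases h2 : (blk b + p) % 2 = 0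
      · rw [if_pos h1, if_pos h2] at hrest
        simp only [toLex_inj, Prod.mk.injEq] at hrest
        exact hι hrest.2.2
      · rw [if_pos h1, if_neg h2] at hrest
        simp only [toLex_inj, Prod.mk.injEq] at hrest
        exfalso
        have hsub := hrest.2.1
        rcases hcRrange a with h0 | h0 <;>
          [skip; skip] <;>
          by_cases hcb : cl b = true <;>
          first
            | (rw [h0, hslot0 b hcb] at hsub; norm_num at hsub)
            | (rw [h0, hslot1 b hcb] at hsub; norm_num at hsub)
      · rw [if_neg h1, if_pos h2] at hrest
        simp only [toLex_inj, Prod.mk.injEq] at hrest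
        exfalso
        have hsub := hrest.2.1
        rcases hcRrange b with h0 | h0 <;>
          by_cases hca : cl a = true <;>
          first
            | (rw [h0, hslot0 a hca] at hsub; norm_num at hsub)
            | (rw [h0, hslot1 a hca] at hsub; norm_num at hsub)
      · rw [if_neg h1, if_neg h2] at hrest
        simp only [toLex_inj, Prod.mk.injEq] at hrest
        exact hι hrest.2.2
    -- coverage
    have hcov : ∀ x y : α, x ≠ y → ¬ x < y → ¬ y < x →
        (keyTwo blk l cR ι y < keyTwo blk l cR ι x ∨
         keyPh 0 blk l cR slot ι y < keyPh 0 blk l cR slot ι x ∨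
         keyPh 1 blk l cR slot ι y < keyPh 1 blk l cR slot ι x) := by
      intro x y hnexy hnxy hnyx
      rw [hlt] at hnxy hnyx
      push_neg at hnxy hnyx
      obtain ⟨hxy1, hxy2⟩ := hnxy
      obtain ⟨hyx1, hyx2⟩ := hnyx
      by_contra hno
      push_neg at hno
      obtain ⟨h0, h1, h2⟩ := hno
      have hble : blk x ≤ blk y := by
        unfold keyTwo at h0
        rcases lex_le_d h0 with h | ⟨h, _⟩
        · exact h.le
        · exact le_of_eq h
      have hbub : blk y ≤ blk x + 1 := by
        by_contra hgt
        push_neg at hgt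
        have := hB2 x y (by omega)
        linarith
      rcases Nat.eq_or_lt_of_le hble with heq | hlt2
      · -- equal blocks
        have hfalse_eq : ∀ p : ℕ, (blk x + p) % 2 = 0 →
            keyPh p blk l cR slot ι x ≤ keyPh p blk l cR slot ι y → False := by
          intro p hp hle
          have hpy : (blk y + p) % 2 = 0 := by omega
          unfold keyPh at hle
          rw [if_pos hp, if_pos hpy] at hle
          unfold keyTwo at h0
          rcases lex_le_d hle with hg | ⟨_, hr1⟩
          · omega
          · rcases lex_le_d h0 with hg0 | ⟨_, h0r⟩
            · omega
            · rcases lex_le_d hr1 with hl1 | ⟨hleq, hr2⟩ <;>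
                rcases lex_le_d h0r with hl0 | ⟨hleq0, h0r2⟩
              · linarith
              · linarith
              · linarith
              · rcases lex_le_d hr2 with hc1 | ⟨hceq, hi1⟩ <;>
                  rcases lex_le_d h0r2 with hc0 | ⟨hceq0, h0i⟩
                · linarith
                · linarith
                · linarith
                · have hieq : ι x = ι y := by
                    have : ι y ≤ ι x := by linarith
                    omega
                  exact hnexy (hι hieq)
        by_cases hpar : blk x % 2 = 0
        · exact hfalse_eq 0 (by omega) h1
        · exact hfalse_eq 1 (by omega) h2
      · -- blk y = blk x + 1
        have hsucc : blk y = blk x + 1 := by omega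
        have hfalse_succ : ∀ p : ℕ, (blk x + p) % 2 = 0 →
            keyPh p blk l cR slot ι x ≤ keyPh p blk l cR slot ι y → False := by
          intro p hp hle
          have hpy : ¬((blk y + p) % 2 = 0) := by omega
          have hgeq : (blk x + p)/2 = (blk y + p)/2 := by omega
          unfold keyPh at hle
          rw [if_pos hp, if_neg hpy] at hle
          rcases lex_le_d hle with hg | ⟨_, hrest⟩
          · omega
          · rcases lex_le_d hrest with hl | ⟨hleq, hinner⟩
            · linarith
            · have hxeq : l x + 1 = l y := by linarith
              obtain ⟨hcx, hcy⟩ := hxy2 hxeq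
              rcases lex_le_d hinner with hc | ⟨hceq, _⟩
              · rw [hcR0 x hcx, hslot0 y hcy] at hc
                norm_num at hc
              · rw [hcR0 x hcx, hslot0 y hcy] at hceq
                norm_num at hceq
        by_cases hpar : blk x % 2 = 0
        · exact hfalse_succ 0 (by omega) h1
        · exact hfalse_succ 1 (by omega) h2
    exact realizer_of_keys
      (keyTwo blk l cR ι) (keyPh 0 blk l cR slot ι) (keyPh 1 blk l cR slot ι)
      hinjTwo (hinjPh 0) (hinjPh 1)
      hextTwo (hextPh 0) (hextPh 1)
      hcov

end Stmt6Aux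

/-- Every finite unit OC interval order has dimension at most 3: each element gets a
unit interval that is either open or closed, and for distinct `x, y` we have `x < y`
iff every point of the interval of `x` is less than every point of the interval of `y`. -/
theorem stmt_6 {α : Type*} [Fintype α] [PartialOrder α]
    (h : ∃ (l : α → ℝ) (I : α → Set ℝ),
      (∀ x, I x = Set.Ioo (l x) (l x + 1) ∨ I x = Set.Icc (l x) (l x + 1)) ∧
      ∀ x y : α, x ≠ y → (x < y ↔ ∀ s ∈ I x, ∀ t ∈ I y, s < t)) :
    DimLE α 3 := by
  classical
  obtain ⟨l, I, hI, hiff⟩ := h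
  have hNe : ∀ z : α, I z = Set.Ioo (l z) (l z + 1) → ¬ (I z = Set.Icc (l z) (l z + 1)) := by
    intro z h1 h2
    rw [h1] at h2
    have : l z ∈ Set.Ioo (l z) (l z + 1) := by
      rw [h2]
      exact ⟨le_refl _, by linarith⟩
    exact lt_irrefl _ this.1
  refine Stmt6Aux.main_aux l (fun z => decide (I z = Set.Icc (l z) (l z + 1))) ?_
  intro x y
  show x < y ↔ (l x + 1 < l y ∨ (l x + 1 = l y ∧
    ¬(decide (I x = Set.Icc (l x) (l x + 1)) = true ∧
      decide (I y = Set.Icc (l y) (l y + 1)) = true)))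
  by_cases hxy : x = y
  · subst hxy
    constructor
    · intro hcon
      exact absurd hcon (lt_irrefl x)
    · rintro (hcon | ⟨hcon, _⟩) <;> linarith
  · rw [hiff x y hxy]
    rcases hI x with hx | hx <;> rcases hI y with hy | hy <;> rw [hx, hy]
    · rw [Stmt6Aux.forall_Ioo_Ioo]
      have hcx : ¬ (decide (Set.Ioo (l x) (l x + 1) = Set.Icc (l x) (l x + 1)) = true) := by
        rw [decide_eq_true_iff]
        intro hq
        exact hNe x hx (hx.trans hq)
      constructor
      · intro hle
        rcases lt_or_eq_of_le hle with hlt2 | heq2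
        · exact Or.inl hlt2
        · exact Or.inr ⟨heq2, fun hc => hcx hc.1⟩
      · rintro (hlt2 | ⟨heq2, _⟩) <;> linarith
    · rw [Stmt6Aux.forall_Ioo_Icc]
      have hcx : ¬ (decide (Set.Ioo (l x) (l x + 1) = Set.Icc (l x) (l x + 1)) = true) := by
        rw [decide_eq_true_iff]
        intro hq
        exact hNe x hx (hx.trans hq)
      constructor
      · intro hle
        rcases lt_or_eq_of_le hle with hlt2 | heq2
        · exact Or.inl hlt2
        · exact Or.inr ⟨heq2, fun hc => hcx hc.1⟩
      · rintro (hlt2 | ⟨heq2, _⟩) <;> linarith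
    · rw [Stmt6Aux.forall_Icc_Ioo]
      have hcy : ¬ (decide (Set.Ioo (l y) (l y + 1) = Set.Icc (l y) (l y + 1)) = true) := by
        rw [decide_eq_true_iff]
        intro hq
        exact hNe y hy (hy.trans hq)
      constructor
      · intro hle
        rcases lt_or_eq_of_le hle with hlt2 | heq2
        · exact Or.inl hlt2
        · exact Or.inr ⟨heq2, fun hc => hcy hc.2⟩
      · rintro (hlt2 | ⟨heq2, _⟩) <;> linarith
    · rw [Stmt6Aux.forall_Icc_Icc]
      constructor
      · exact Or.inl
      · rintro (h2 | ⟨heq2, hn⟩)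
        · exact h2
        · exact absurd ⟨decide_eq_true rfl, decide_eq_true rfl⟩ hn
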